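/- If F is a Sperner family (antichain) on [n] that is non 2-covering (no two sets in F have union equal to [n]) and contains a set A0 with |A0| ≤ εn for some constant ε ∈ (0,1/2), then |F| ≤ (1 - 1/C(n, ⌊εn⌋)) · C(n, ⌊(n-1)/2⌋) + 1. -/

import Mathlib

open Finset Equiv
open Fin.NatCast Fin.CommRing

variable {n : ℕ} [NeZero n]

lemma fin_natCast_inj {i j : ℕ} (hi : i < n) (hj : j < n) (h : (i : Fin n) = j) : i = j := by
  have := congrArg Fin.val h
  rwa [Fin.val_natCast, Fin.val_natCast, Nat.mod_eq_of_lt hi, Nat.mod_eq_of_lt hj] at this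

def arcIdx (j : Fin n) (l : ℕ) : Finset (Fin n) := (range l).image (fun i : ℕ => j + (i : Fin n))

lemma card_arcIdx (j : Fin n) {l : ℕ} (hl : l ≤ n) : (arcIdx j l).card = l := by
  rw [arcIdx, Finset.card_image_of_injOn, card_range]
  intro a ha b hb hab
  simp only [coe_range, Set.mem_Iio] at ha hb
  exact fin_natCast_inj (lt_of_lt_of_le ha hl) (lt_of_lt_of_le hb hl) (add_left_cancel hab)

noncomputable def arc (π : Perm (Fin n)) (j : Fin n) (l : ℕ) : Finset (Fin n) :=
  (arcIdx j l).image π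

lemma card_arc (π : Perm (Fin n)) (j : Fin n) {l : ℕ} (hl : l ≤ n) : (arc π j l).card = l := by
  rw [arc, Finset.card_image_of_injective _ π.injective, card_arcIdx j hl]

lemma exists_perm_image {A B : Finset (Fin n)} (h : A.card = B.card) :
    ∃ σ : Perm (Fin n), A.image σ = B := by
  classical
  have h1 : Fintype.card {x // x ∈ A} = Fintype.card {x // x ∈ B} := by
    simpa using h
  have h2 : Fintype.card {x // ¬ x ∈ A} = Fintype.card {x // ¬ x ∈ B} := by
    rw [Fintype.card_subtype_compl, Fintype.card_subtype_compl]
    simp [h1]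
  let e := Fintype.equivOfCardEq h1
  let e' := Fintype.equivOfCardEq h2
  let σ : Perm (Fin n) :=
    ((Equiv.sumCompl (· ∈ A)).symm.trans ((e.sumCongr e').trans (Equiv.sumCompl (· ∈ B))))
  refine ⟨σ, ?_⟩
  apply Finset.eq_of_subset_of_card_le
  · intro b hb
    simp only [Finset.mem_image] at hb
    obtain ⟨a, ha, rfl⟩ := hb
    have : σ a = ↑(e ⟨a, ha⟩) := by
      simp only [σ, Equiv.trans_apply, Equiv.sumCompl_symm_apply_of_pos ha,
        Equiv.sumCongr_apply, Sum.map_inl, Equiv.sumCompl_apply_inl]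
    rw [this]
    exact (e ⟨a, ha⟩).2
  · rw [Finset.card_image_of_injective _ σ.injective, h]

lemma count_perm_image (P A : Finset (Fin n)) (h : P.card = A.card) :
    (univ.filter fun π : Perm (Fin n) => P.image (π : Fin n → Fin n) = A).card
      = Nat.factorial P.card * Nat.factorial (n - P.card) := by
  classical
  -- constancy in A
  have const : ∀ B : Finset (Fin n), P.card = B.card →
      (univ.filter fun π : Perm (Fin n) => P.image (π : Fin n → Fin n) = B).card
        = (univ.filter fun π : Perm (Fin n) => P.image (π : Fin n → Fin n) = A).card := by
    intro B hB
    obtain ⟨σ, hσ⟩ := exists_perm_image (h.symm.trans hB)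
    apply Finset.card_bij (fun π _ => σ⁻¹ * π)
    · intro π hπ
      simp only [Finset.mem_filter, Finset.mem_univ, true_and] at hπ ⊢
      have hA : A = Finset.image (⇑(σ⁻¹ : Perm (Fin n))) B := by
        rw [← hσ, Finset.image_image]
        ext x
        simp
      rw [hA, ← hπ, Finset.image_image]
      rfl
    · intro π hπ π' hπ' hee
      exact mul_left_cancel hee
    · intro τ hτ
      refine ⟨σ * τ, ?_, by group⟩
      simp only [Finset.mem_filter, Finset.mem_univ, true_and] at hτ ⊢
      rw [← hσ, ← hτ, Finset.image_image]
      rfl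
  -- sum over all B of card P
  have partition :
      ∑ B ∈ univ.powersetCard P.card,
        (univ.filter fun π : Perm (Fin n) => P.image (π : Fin n → Fin n) = B).card
        = (univ : Finset (Perm (Fin n))).card := by
    rw [Finset.card_eq_sum_card_fiberwise
      (f := fun π : Perm (Fin n) => P.image (π : Fin n → Fin n))
      (t := univ.powersetCard P.card)]
    intro π _
    simp [Finset.mem_powersetCard_univ, Finset.card_image_of_injective _ π.injective]
  have hPn : P.card ≤ n := by simpa using P.card_le_univ
  have hconstsum :
      ∑ B ∈ univ.powersetCard P.card,
        (univ.filter fun π : Perm (Fin n) => P.image (π : Fin n → Fin n) = B).card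
        = n.choose P.card *
          (univ.filter fun π : Perm (Fin n) => P.image (π : Fin n → Fin n) = A).card := by
    rw [Finset.sum_congr rfl (fun B hB => const B (by
      rw [Finset.mem_powersetCard_univ] at hB; exact hB.symm))]
    rw [Finset.sum_const, Finset.card_powersetCard, Finset.card_univ, Fintype.card_fin,
      smul_eq_mul]
  have hcardperm : (univ : Finset (Perm (Fin n))).card = Nat.factorial n := by
    rw [Finset.card_univ, Fintype.card_perm, Fintype.card_fin]
  have key : n.choose P.card *
      (univ.filter fun π : Perm (Fin n) => P.image (π : Fin n → Fin n) = A).card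
      = n.choose P.card * (Nat.factorial P.card * Nat.factorial (n - P.card)) := by
    rw [← hconstsum, partition, hcardperm]
    rw [← mul_assoc]
    exact (Nat.choose_mul_factorial_mul_factorial hPn).symm
  exact Nat.eq_of_mul_eq_mul_left (Nat.choose_pos hPn) key




lemma mem_arcIdx_iff {j x : Fin n} {l : ℕ} :
    x ∈ arcIdx j l ↔ ∃ i : ℕ, i < l ∧ j + (i : Fin n) = x := by
  simp [arcIdx, mem_range]

lemma arcIdx_succ (j : Fin n) (l : ℕ) :
    arcIdx j (l + 1) = insert (j + (l : Fin n)) (arcIdx j l) := by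
  rw [arcIdx, arcIdx, Finset.range_add_one, Finset.image_insert]

lemma add_nat_not_mem_arcIdx (j : Fin n) {l : ℕ} (hl : l < n) : j + (l : Fin n) ∉ arcIdx j l := by
  intro hmem
  obtain ⟨i, hi, hie⟩ := mem_arcIdx_iff.1 hmem
  have hc : j + (i : Fin n) = j + (l : Fin n) := by rw [hie]
  have := fin_natCast_inj (lt_trans hi hl) hl (add_left_cancel hc)
  omega

lemma arcIdx_pred (j : Fin n) (l : ℕ) :
    arcIdx (j - 1) (l + 1) = insert (j - 1) (arcIdx j l) := by
  ext x
  simp only [mem_arcIdx_iff, Finset.mem_insert]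
  constructor
  · rintro ⟨i, hi, rfl⟩
    rcases Nat.eq_zero_or_eq_succ_pred i with h0 | hs
    · subst h0; left; simp
    · right
      refine ⟨i - 1, by omega, ?_⟩
      have : (i : Fin n) = ((i - 1 : ℕ) : Fin n) + 1 := by
        conv_lhs => rw [hs]
        have : i.pred = i - 1 := rfl
        rw [this]
        push_cast
        ring
      rw [this]
      ring
  · rintro (rfl | ⟨i, hi, rfl⟩)
    · exact ⟨0, by omega, by simp⟩
    · refine ⟨i + 1, by omega, ?_⟩
      push_cast
      ring

lemma arcIdx_univ (j : Fin n) : arcIdx j n = univ := by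
  apply Finset.eq_univ_of_card
  rw [card_arcIdx j le_rfl, Fintype.card_fin]

lemma arcIdx_add (j : Fin n) (k m : ℕ) :
    arcIdx j (k + m) = arcIdx j k ∪ arcIdx (j + (k : Fin n)) m := by
  ext x
  simp only [mem_arcIdx_iff, Finset.mem_union]
  constructor
  · rintro ⟨i, hi, rfl⟩
    rcases lt_or_ge i k with h | h
    · exact Or.inl ⟨i, h, rfl⟩
    · refine Or.inr ⟨i - k, by omega, ?_⟩
      have : (i : Fin n) = (k : Fin n) + ((i - k : ℕ) : Fin n) := by
        rw [← Nat.cast_add]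
        congr 1
        omega
      rw [this]
      ring
  · rintro (⟨i, hi, rfl⟩ | ⟨i, hi, rfl⟩)
    · exact ⟨i, by omega, rfl⟩
    · refine ⟨k + i, by omega, ?_⟩
      push_cast
      ring

lemma arc_antipode {k : ℕ} (hn : n = 2 * k) (π : Perm (Fin n)) (j : Fin n) :
    arc π (j + (k : Fin n)) k = (arc π j k)ᶜ := by
  have hkn : k ≤ n := by omega
  have huniv : arc π j k ∪ arc π (j + (k : Fin n)) k = univ := by
    rw [arc, arc, ← Finset.image_union, ← arcIdx_add]
    have : k + k = n := by omega
    rw [this, arcIdx_univ]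
    simp [Finset.image_univ_equiv]
  apply Finset.eq_of_subset_of_card_le
  · intro x hx
    rw [Finset.mem_compl]
    intro hx2
    have hcard : (arc π j k ∪ arc π (j + (k : Fin n)) k).card + (arc π j k ∩ arc π (j + (k : Fin n)) k).card = (arc π j k).card + (arc π (j + (k : Fin n)) k).card :=
      Finset.card_union_add_card_inter _ _
    rw [huniv, card_arc _ _ hkn, card_arc _ _ hkn, Finset.card_univ, Fintype.card_fin] at hcard
    have : (arc π j k ∩ arc π (j + (k : Fin n)) k).card = 0 := by omega
    rw [Finset.card_eq_zero] at this
    have : x ∈ arc π j k ∩ arc π (j + (k : Fin n)) k := Finset.mem_inter.2 ⟨hx2, hx⟩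
    simp [*] at this
  · rw [Finset.card_compl, card_arc _ _ hkn, card_arc _ _ hkn, Fintype.card_fin]
    omega

open scoped FinsetFamily

lemma exists_boundary {S : Finset (Fin n)} (hne : S.Nonempty) (huniv : S ≠ univ) :
    ∃ s ∈ S, s - 1 ∉ S := by
  by_contra hcon
  push_neg at hcon
  obtain ⟨s₀, hs₀⟩ := hne
  have hall : ∀ m : ℕ, s₀ - (m : Fin n) ∈ S := by
    intro m
    induction m with
    | zero => simpa using hs₀
    | succ m ih =>
      have he : s₀ - ((m + 1 : ℕ) : Fin n) = (s₀ - (m : Fin n)) - 1 := by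
        push_cast
        ring
      rw [he]
      exact hcon _ ih
  apply huniv
  apply Finset.eq_univ_of_forall
  intro x
  have := hall ((s₀ - x).val)
  rwa [Fin.cast_val_eq_self, sub_sub_cancel] at this

lemma pred_not_mem_arcIdx (j : Fin n) {l : ℕ} (hl : l < n) : j - 1 ∉ arcIdx j l := by
  intro hmem
  obtain ⟨i, hi, hie⟩ := mem_arcIdx_iff.1 hmem
  have h1 : ((i + 1 : ℕ) : Fin n) = ((0 : ℕ) : Fin n) := by
    push_cast
    have : (i : Fin n) = -1 := by
      have := hie
      have h2 : j + (i : Fin n) - j = j - 1 - j := by rw [this]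
      simpa [sub_eq_add_neg, add_comm, add_left_comm, add_assoc] using h2
    rw [this]
    ring
  have := fin_natCast_inj (by omega) (Nat.pos_of_ne_zero (NeZero.ne n)) h1
  omega

lemma arc_insert_top (π : Perm (Fin n)) (j : Fin n) {l : ℕ} (hl : l < n) :
    arc π j (l + 1) = insert (π (j + (l : Fin n))) (arc π j l) ∧
      π (j + (l : Fin n)) ∉ arc π j l := by
  constructor
  · rw [arc, arc, arcIdx_succ, Finset.image_insert]
  · intro hmem
    rw [arc, Finset.mem_image] at hmem
    obtain ⟨x, hx, hxe⟩ := hmem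
    exact add_nat_not_mem_arcIdx j hl (π.injective hxe ▸ hx)

lemma arc_insert_bot (π : Perm (Fin n)) (j : Fin n) {l : ℕ} (hl : l < n) :
    arc π (j - 1) (l + 1) = insert (π (j - 1)) (arc π j l) ∧
      π (j - 1) ∉ arc π j l := by
  constructor
  · rw [arc, arc, arcIdx_pred, Finset.image_insert]
  · intro hmem
    rw [arc, Finset.mem_image] at hmem
    obtain ⟨x, hx, hxe⟩ := hmem
    exact pred_not_mem_arcIdx j hl (π.injective hxe ▸ hx)

lemma count_arc_mem (j : Fin n) {l : ℕ} (hl : l ≤ n) (𝒢 : Finset (Finset (Fin n)))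
    (h𝒢 : ∀ X ∈ 𝒢, X.card = l) :
    (univ.filter fun π : Perm (Fin n) => arc π j l ∈ 𝒢).card
      = 𝒢.card * (Nat.factorial l * Nat.factorial (n - l)) := by
  classical
  rw [Finset.card_eq_sum_card_fiberwise (s := univ.filter fun π : Perm (Fin n) => arc π j l ∈ 𝒢)
    (f := fun π : Perm (Fin n) => arc π j l) (t := 𝒢)
    (fun π hπ => (Finset.mem_filter.1 hπ).2)]
  have heach : ∀ A ∈ 𝒢,
      ((univ.filter fun π : Perm (Fin n) => arc π j l ∈ 𝒢).filter
        fun π => arc π j l = A).card = Nat.factorial l * Nat.factorial (n - l) := by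
    intro A hA
    have hfe : ((univ.filter fun π : Perm (Fin n) => arc π j l ∈ 𝒢).filter
        fun π => arc π j l = A)
        = univ.filter fun π : Perm (Fin n) => (arcIdx j l).image (π : Fin n → Fin n) = A := by
      ext π
      simp only [Finset.mem_filter, Finset.mem_univ, true_and]
      simp only [arc]
      constructor
      · rintro ⟨_, h⟩; exact h
      · intro h; exact ⟨h ▸ hA, h⟩
    rw [hfe, count_perm_image _ _ (by rw [card_arcIdx j hl, h𝒢 A hA]), card_arcIdx j hl]
  rw [Finset.sum_congr rfl heach, Finset.sum_const, smul_eq_mul]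

lemma middle_shadow {k : ℕ} (hn : n = 2 * k) (hk : 0 < k) (T : Finset (Finset (Fin n)))
    (hT : ∀ X ∈ T, X.card = k)
    (hint : ∀ X ∈ T, ∀ Y ∈ T, X ∩ Y ≠ ∅) :
    T.card ≤ (∂⁺ T).card := by
  classical
  have hkn : k < n := by omega
  have hk1n : k + 1 ≤ n := by omega
  set S : Perm (Fin n) → Finset (Fin n) :=
    fun π => univ.filter (fun j => arc π j k ∈ T) with hS
  set W : Perm (Fin n) → Finset (Fin n) :=
    fun π => univ.filter (fun j => arc π j (k + 1) ∈ ∂⁺ T) with hW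
  -- membership facts
  have hSW : ∀ π j, j ∈ S π → j ∈ W π := by
    intro π j hj
    rw [hS, Finset.mem_filter] at hj
    rw [hW, Finset.mem_filter]
    obtain ⟨heq, hnm⟩ := arc_insert_top π j hkn
    refine ⟨Finset.mem_univ _, Finset.mem_upShadow_iff.2 ⟨arc π j k, hj.2, _, hnm, heq.symm⟩⟩
  have hSW' : ∀ π j, j ∈ S π → j - 1 ∈ W π := by
    intro π j hj
    rw [hS, Finset.mem_filter] at hj
    rw [hW, Finset.mem_filter]
    obtain ⟨heq, hnm⟩ := arc_insert_bot π j hkn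
    refine ⟨Finset.mem_univ _, Finset.mem_upShadow_iff.2 ⟨arc π j k, hj.2, _, hnm, heq.symm⟩⟩
  have hanti : ∀ π j, j ∈ S π → j + (k : Fin n) ∉ S π := by
    intro π j hj hj2
    rw [hS, Finset.mem_filter] at hj hj2
    have := arc_antipode hn π j
    rw [this] at hj2
    exact hint _ hj.2 _ hj2.2 (Finset.inter_compl _)
  -- card S π ≤ k
  have hcardS : ∀ π, (S π).card ≤ k := by
    intro π
    have hinj : Function.Injective (fun x : Fin n => x + (k : Fin n)) := by
      intro a b hab
      simpa using hab
    have hdisj : Disjoint (S π) ((S π).image (fun x => x + (k : Fin n))) := by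
      rw [Finset.disjoint_right]
      intro x hx1 hx2
      rw [Finset.mem_image] at hx1
      obtain ⟨j, hj, rfl⟩ := hx1
      exact hanti π j hj hx2
    have := Finset.card_union_of_disjoint hdisj ▸
      Finset.card_le_univ ((S π) ∪ (S π).image (fun x => x + (k : Fin n)))
    rw [Finset.card_image_of_injective _ hinj, Fintype.card_fin] at this
    omega
  -- per-π inequality
  have hperπ : ∀ π, (k + 1) * (S π).card ≤ k * (W π).card := by
    intro π
    rcases Finset.eq_empty_or_nonempty (S π) with he | hne
    · simp [he]
    · have hSneuniv : S π ≠ univ := by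
        obtain ⟨j, hj⟩ := hne
        intro hu
        exact hanti π j hj (hu ▸ Finset.mem_univ _)
      obtain ⟨s, hs, hsb⟩ := exists_boundary hne hSneuniv
      have hsub : insert (s - 1) (S π) ⊆ W π := by
        intro x hx
        rcases Finset.mem_insert.1 hx with rfl | hx
        · exact hSW' π s hs
        · exact hSW π x hx
      have hW1 : (S π).card + 1 ≤ (W π).card := by
        have := Finset.card_le_card hsub
        rwa [Finset.card_insert_of_notMem hsb] at this
      have := hcardS π
      nlinarith [hW1, this]
  -- double counting
  have hsum : ∀ (𝒢 : Finset (Finset (Fin n))) (l : ℕ), l ≤ n → (∀ X ∈ 𝒢, X.card = l) →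
      ∑ π : Perm (Fin n), (univ.filter (fun j => arc π j l ∈ 𝒢)).card
        = n * (𝒢.card * (Nat.factorial l * Nat.factorial (n - l))) := by
    intro 𝒢 l hl h𝒢
    have swap : ∑ π : Perm (Fin n), (univ.filter (fun j => arc π j l ∈ 𝒢)).card
        = ∑ j : Fin n, (univ.filter fun π : Perm (Fin n) => arc π j l ∈ 𝒢).card := by
      simp_rw [Finset.card_filter]
      rw [Finset.sum_comm]
    rw [swap]
    rw [Finset.sum_congr rfl (fun j _ => count_arc_mem j hl 𝒢 h𝒢), Finset.sum_const,
      smul_eq_mul, Finset.card_univ, Fintype.card_fin]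
  have hTsum := hsum T k (le_of_lt hkn) hT
  have hWsum := hsum (∂⁺ T) (k + 1) hk1n
    (fun X hX => (Set.Sized.upShadow (fun Y hY => hT Y hY)) hX)
  have hmain : (k + 1) * (n * (T.card * (Nat.factorial k * Nat.factorial (n - k))))
      ≤ k * (n * ((∂⁺ T).card * (Nat.factorial (k + 1) * Nat.factorial (n - (k + 1))))) := by
    rw [← hTsum, ← hWsum, Finset.mul_sum, Finset.mul_sum]
    exact Finset.sum_le_sum (fun π _ => hperπ π)
  -- arithmetic
  have hnk : n - k = k := by omega
  have hnk1 : n - (k + 1) = k - 1 := by omega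
  rw [hnk, hnk1] at hmain
  have hfac1 : (k + 1) * (Nat.factorial k * Nat.factorial k)
      = (k + 1) * Nat.factorial k * Nat.factorial k := by ring
  have key : T.card * ((k + 1) * n * (Nat.factorial k * Nat.factorial k))
      ≤ (∂⁺ T).card * ((k + 1) * n * (Nat.factorial k * Nat.factorial k)) := by
    calc T.card * ((k + 1) * n * (Nat.factorial k * Nat.factorial k))
        = (k + 1) * (n * (T.card * (Nat.factorial k * Nat.factorial k))) := by ring
      _ ≤ k * (n * ((∂⁺ T).card * (Nat.factorial (k + 1) * Nat.factorial (k - 1)))) := hmain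
      _ = (∂⁺ T).card * (n * (k * (Nat.factorial (k + 1) * Nat.factorial (k - 1)))) := by ring
      _ = (∂⁺ T).card * ((k + 1) * n * (Nat.factorial k * Nat.factorial k)) := by
          congr 1
          rw [Nat.factorial_succ]
          have : k * ((k + 1) * Nat.factorial k * Nat.factorial (k - 1))
              = (k + 1) * Nat.factorial k * (k * Nat.factorial (k - 1)) := by ring
          rw [this, Nat.mul_factorial_pred hk.ne']
          ring
  have hpos : 0 < (k + 1) * n * (Nat.factorial k * Nat.factorial k) := by
    have := Nat.factorial_pos k
    have hn0 : 0 < n := by omega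
    positivity
  exact Nat.le_of_mul_le_mul_right key hpos

omit [NeZero n] in
lemma choose_mono_half {x y : ℕ} (hxy : x ≤ y) (hy : y ≤ n / 2) :
    n.choose x ≤ n.choose y := by
  induction y with
  | zero =>
    have : x = 0 := by omega
    subst this; exact le_rfl
  | succ y ih =>
    rcases Nat.lt_or_ge x (y + 1) with h | h
    · have h1 : n.choose x ≤ n.choose y := ih (by omega) (by omega)
      have h2 : n.choose y ≤ n.choose (y + 1) :=
        Nat.choose_le_succ_of_lt_half_left (by omega)
      omega
    · have : x = y + 1 := by omega
      subst this
      exact le_rfl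

omit [NeZero n] in
lemma low_shadow {j : ℕ} (hj : 2 * j < n) (T : Finset (Finset (Fin n)))
    (hT : ∀ X ∈ T, X.card = j) :
    T.card ≤ (∂⁺ T).card := by
  classical
  have hsized : ((Tᶜˢ : Finset (Finset (Fin n))) : Set (Finset (Fin n))).Sized (n - j) := by
    intro X hX
    rw [Finset.mem_coe, Finset.mem_compls] at hX
    have h1 : Xᶜ.card = j := hT _ hX
    have h2 : Xᶜ.card = Fintype.card (Fin n) - X.card := Finset.card_compl X
    have h3 : X.card ≤ n := by simpa using X.card_le_univ
    rw [Fintype.card_fin] at h2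
    omega
  have hllym := Finset.card_mul_le_card_shadow_mul hsized
  rw [Finset.shadow_compls, Finset.card_compls, Finset.card_compls, Fintype.card_fin] at hllym
  have h4 : n - (n - j) + 1 = j + 1 := by omega
  rw [h4] at hllym
  have h5 : (∂⁺ T).card * (j + 1) ≤ (∂⁺ T).card * (n - j) :=
    Nat.mul_le_mul_left _ (by omega)
  have h6 : T.card * (n - j) ≤ (∂⁺ T).card * (n - j) := le_trans hllym h5
  exact Nat.le_of_mul_le_mul_right h6 (by omega)

lemma push_up (d : ℕ) : ∀ (j : ℕ) (G : Finset (Finset (Fin n))),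
    j + d = n / 2 + 1 →
    IsAntichain (· ⊆ ·) (G : Set (Finset (Fin n))) →
    (∀ X ∈ G, ∀ Y ∈ G, X ∩ Y ≠ ∅) →
    (∀ X ∈ G, j ≤ X.card) →
    ∃ G' : Finset (Finset (Fin n)),
      IsAntichain (· ⊆ ·) (G' : Set (Finset (Fin n))) ∧
      (∀ X ∈ G', n / 2 + 1 ≤ X.card) ∧
      G.card ≤ G'.card ∧
      (∀ X ∈ G, n / 2 + 1 ≤ X.card → X ∈ G') := by
  induction d with
  | zero =>
    intro j G hj hA hI hsz
    exact ⟨G, hA, fun X hX => hj ▸ hsz X hX, le_rfl, fun X hX _ => hX⟩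
  | succ d ih =>
    intro j G hj hA hI hsz
    classical
    have hjhalf : j ≤ n / 2 := by omega
    set T := G.filter (fun X => X.card = j) with hTdef
    have hTsub : T ⊆ G := Finset.filter_subset _ _
    have hTsized : ∀ X ∈ T, X.card = j := fun X hX => (Finset.mem_filter.1 hX).2
    have hupT : ∀ X ∈ ∂⁺ T, (∃ A ∈ T, A ⊆ X) ∧ X.card = j + 1 := by
      intro X hX
      obtain ⟨A, hA', a, ha, rfl⟩ := Finset.mem_upShadow_iff.1 hX
      refine ⟨⟨A, hA', Finset.subset_insert _ _⟩, ?_⟩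
      rw [Finset.card_insert_of_notMem ha, hTsized A hA']
    have hnotG : ∀ X ∈ ∂⁺ T, X ∉ G := by
      intro X hX hXG
      obtain ⟨⟨A, hAT, hAX⟩, hcard⟩ := hupT X hX
      have hne : A ≠ X := by
        intro h
        rw [h] at hAT
        have := hTsized X hAT
        omega
      exact hA (Finset.mem_coe.2 (hTsub hAT)) (Finset.mem_coe.2 hXG) hne hAX
    set G₂ := (G \ T) ∪ ∂⁺ T with hG₂
    have hmemG₂ : ∀ X, X ∈ G₂ ↔ (X ∈ G ∧ X.card ≠ j) ∨ X ∈ ∂⁺ T := by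
      intro X
      rw [hG₂, Finset.mem_union, Finset.mem_sdiff, hTdef, Finset.mem_filter]
      tauto
    have hsz₂ : ∀ X ∈ G₂, j + 1 ≤ X.card := by
      intro X hX
      rcases (hmemG₂ X).1 hX with ⟨hXG, hXc⟩ | hXs
      · have := hsz X hXG; omega
      · exact le_of_eq (hupT X hXs).2.symm
    have hsup : ∀ X ∈ G₂, ∃ A ∈ G, A ⊆ X := by
      intro X hX
      rcases (hmemG₂ X).1 hX with ⟨hXG, _⟩ | hXs
      · exact ⟨X, hXG, subset_rfl⟩
      · obtain ⟨⟨A, hAT, hAX⟩, _⟩ := hupT X hXs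
        exact ⟨A, hTsub hAT, hAX⟩
    have hI₂ : ∀ X ∈ G₂, ∀ Y ∈ G₂, X ∩ Y ≠ ∅ := by
      intro X hX Y hY hempty
      obtain ⟨A, hAG, hAX⟩ := hsup X hX
      obtain ⟨B, hBG, hBY⟩ := hsup Y hY
      apply hI A hAG B hBG
      rw [← Finset.subset_empty, ← hempty]
      exact Finset.inter_subset_inter hAX hBY
    have hA₂ : IsAntichain (· ⊆ ·) (G₂ : Set (Finset (Fin n))) := by
      intro X hX Y hY hne hsub
      rw [Finset.mem_coe] at hX hY
      rcases (hmemG₂ X).1 hX with ⟨hXG, hXc⟩ | hXs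
      · rcases (hmemG₂ Y).1 hY with ⟨hYG, hYc⟩ | hYs
        · exact hA (Finset.mem_coe.2 hXG) (Finset.mem_coe.2 hYG) hne hsub
        · have hYcard := (hupT Y hYs).2
          have hlt : X.card < Y.card :=
            Finset.card_lt_card (Finset.ssubset_iff_subset_ne.2 ⟨hsub, hne⟩)
          have := hsz X hXG
          omega
      · rcases (hmemG₂ Y).1 hY with ⟨hYG, hYc⟩ | hYs
        · obtain ⟨⟨A', hAT, hAX⟩, _⟩ := hupT X hXs
          have hAY : A' ⊆ Y := hAX.trans hsub
          have hne2 : A' ≠ Y := by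
            intro h
            rw [h] at hAT
            exact hYc (hTsized Y hAT)
          exact hA (Finset.mem_coe.2 (hTsub hAT)) (Finset.mem_coe.2 hYG) hne2 hAY
        · have h1 := (hupT X hXs).2
          have h2 := (hupT Y hYs).2
          exact hne (Finset.eq_of_subset_of_card_le hsub (by omega))
    have hdisj : Disjoint (G \ T) (∂⁺ T) := by
      rw [Finset.disjoint_right]
      intro X hX1 hX2
      exact hnotG X hX1 (Finset.mem_sdiff.1 hX2).1
    have hshadowcard : T.card ≤ (∂⁺ T).card := by
      rcases Nat.lt_or_ge (2 * j) n with h | h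
      · exact low_shadow h T hTsized
      · have hn2j : n = 2 * j := by omega
        have hj0 : 0 < j := by
          rcases Nat.eq_zero_or_pos j with h0 | h0
          · exfalso; have := NeZero.ne n; omega
          · exact h0
        exact middle_shadow hn2j hj0 T hTsized
          (fun X hX Y hY => hI X (hTsub hX) Y (hTsub hY))
    have hcard₂ : G.card ≤ G₂.card := by
      rw [hG₂, Finset.card_union_of_disjoint hdisj, Finset.card_sdiff_of_subset hTsub]
      have := Finset.card_le_card hTsub
      omega
    obtain ⟨G', h1, h2, h3, h4⟩ := ih (j + 1) G₂ (by omega) hA₂ hI₂ hsz₂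
    refine ⟨G', h1, h2, le_trans hcard₂ h3, ?_⟩
    intro X hX hXc
    apply h4 X _ hXc
    rw [hmemG₂ X]
    left
    exact ⟨hX, by omega⟩

lemma final_bound (G' : Finset (Finset (Fin n)))
    (hA : IsAntichain (· ⊆ ·) (G' : Set (Finset (Fin n))))
    (hsz : ∀ X ∈ G', n / 2 + 1 ≤ X.card)
    (B₀ : Finset (Fin n)) (hB₀ : B₀ ∈ G') :
    (G'.card : ℝ) ≤ (1 - 1 / (n.choose B₀.card : ℝ)) * (n.choose ((n - 1) / 2) : ℝ) + 1 := by
  classical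
  have hn1 : 1 ≤ n := Nat.one_le_iff_ne_zero.2 (NeZero.ne n)
  set M := n.choose ((n - 1) / 2) with hM
  have hMpos : 0 < M := Nat.choose_pos (by omega)
  have hCr : ∀ r, n / 2 + 1 ≤ r → r ≤ n → n.choose r ≤ M := by
    intro r h1 h2
    have hsymm : n.choose (n - r) = n.choose r := Nat.choose_symm h2
    rw [← hsymm, hM]
    exact choose_mono_half (by omega) (by omega)
  set r₀ := B₀.card with hr₀def
  have hr₀1 : n / 2 + 1 ≤ r₀ := hsz B₀ hB₀
  have hr₀2 : r₀ ≤ n := by simpa using B₀.card_le_univ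
  set C := n.choose r₀ with hC
  have hCpos : 0 < C := Nat.choose_pos hr₀2
  have hCM : C ≤ M := hCr r₀ hr₀1 hr₀2
  have hlym := Finset.sum_card_slice_div_choose_le_one (𝕜 := ℝ) hA
  rw [Fintype.card_fin] at hlym
  have hr₀mem : r₀ ∈ Finset.range (n + 1) := Finset.mem_range.2 (by omega)
  -- termwise lower bound
  have hterm : ∀ r ∈ Finset.range (n + 1),
      ((G' # r).card : ℝ) / (M : ℝ) + (if r = r₀ then 1 / (C : ℝ) - 1 / (M : ℝ) else 0)
        ≤ ((G' # r).card : ℝ) / (n.choose r : ℝ) := by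
    intro r hr
    rw [Finset.mem_range] at hr
    have hchoosepos : (0 : ℝ) < (n.choose r : ℝ) := by
      exact_mod_cast Nat.choose_pos (by omega)
    have hMposR : (0 : ℝ) < (M : ℝ) := by exact_mod_cast hMpos
    rcases Finset.eq_empty_or_nonempty (G' # r) with he | hne
    · rcases eq_or_ne r r₀ with rfl | hner
      · exfalso
        have : B₀ ∈ G' # r₀ := Finset.mem_slice.2 ⟨hB₀, rfl⟩
        simp [he] at this
      · simp [he, hner]
    · obtain ⟨X, hX⟩ := hne
      have hXmem := Finset.mem_slice.1 hX
      have hrge : n / 2 + 1 ≤ r := hXmem.2 ▸ hsz X hXmem.1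
      have hrM : n.choose r ≤ M := hCr r hrge (by omega)
      have hbase : ((G' # r).card : ℝ) / (M : ℝ) ≤ ((G' # r).card : ℝ) / (n.choose r : ℝ) :=
        div_le_div_of_nonneg_left (by positivity) hchoosepos (by exact_mod_cast hrM)
      rcases eq_or_ne r r₀ with rfl | hner
      · have hcard1 : 1 ≤ (G' # r₀).card :=
          Finset.card_pos.2 ⟨B₀, Finset.mem_slice.2 ⟨hB₀, rfl⟩⟩
        have hCposR : (0 : ℝ) < (C : ℝ) := by exact_mod_cast hCpos
        have hCMR : (C : ℝ) ≤ (M : ℝ) := by exact_mod_cast hCM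
        have hs1 : (1 : ℝ) ≤ ((G' # r₀).card : ℝ) := by exact_mod_cast hcard1
        simp only [if_pos rfl]
        rw [← hC]
        have hinv : 1 / (M : ℝ) ≤ 1 / (C : ℝ) := by
          apply one_div_le_one_div_of_le hCposR hCMR
        have expand : ((G' # r₀).card : ℝ) / (C : ℝ)
            = (((G' # r₀).card : ℝ) - 1) / (C : ℝ) + 1 / (C : ℝ) := by
          field_simp
          ring
        rw [expand]
        have h1 : (((G' # r₀).card : ℝ) - 1) / (M : ℝ) ≤ (((G' # r₀).card : ℝ) - 1) / (C : ℝ) :=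
          div_le_div_of_nonneg_left (by linarith) hCposR hCMR
        have h2 : ((G' # r₀).card : ℝ) / (M : ℝ)
            = (((G' # r₀).card : ℝ) - 1) / (M : ℝ) + 1 / (M : ℝ) := by
          field_simp
          ring
        rw [h2]
        simp only [if_true]
        linarith
      · simp only [if_neg hner, add_zero]
        exact hbase
  have hsum := Finset.sum_le_sum hterm
  have hsumsplit : ∑ r ∈ Finset.range (n + 1),
      (((G' # r).card : ℝ) / (M : ℝ) + (if r = r₀ then 1 / (C : ℝ) - 1 / (M : ℝ) else 0))
      = (G'.card : ℝ) / (M : ℝ) + (1 / (C : ℝ) - 1 / (M : ℝ)) := by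
    rw [Finset.sum_add_distrib]
    congr 1
    · rw [← Finset.sum_div]
      congr 1
      have : ∑ r ∈ Finset.range (n + 1), ((G' # r).card : ℝ)
          = ((∑ r ∈ Finset.range (n + 1), (G' # r).card : ℕ) : ℝ) := by
        push_cast
        rfl
      rw [this]
      congr 1
      have hIic : Finset.range (n + 1) = Finset.Iic n := by
        ext x
        simp [Nat.lt_succ_iff]
      rw [hIic]
      have hslice := Finset.sum_card_slice (𝒜 := G')
      rwa [Fintype.card_fin] at hslice
    · rw [Finset.sum_ite_eq' (Finset.range (n + 1)) r₀ (fun _ => 1 / (C : ℝ) - 1 / (M : ℝ))]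
      simp [hr₀mem]
  rw [hsumsplit] at hsum
  have hfinal : (G'.card : ℝ) / (M : ℝ) + (1 / (C : ℝ) - 1 / (M : ℝ)) ≤ 1 :=
    le_trans hsum hlym
  have hMposR : (0 : ℝ) < (M : ℝ) := by exact_mod_cast hMpos
  have hdiv : (G'.card : ℝ) / (M : ℝ) ≤ 1 - 1 / (C : ℝ) + 1 / (M : ℝ) := by linarith
  have := (div_le_iff₀ hMposR).1 hdiv
  calc (G'.card : ℝ) ≤ (1 - 1 / (C : ℝ) + 1 / (M : ℝ)) * (M : ℝ) := this
    _ = (1 - 1 / (C : ℝ)) * (M : ℝ) + 1 := by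
        field_simp
    _ = (1 - 1 / (n.choose B₀.card : ℝ)) * (n.choose ((n - 1) / 2) : ℝ) + 1 := by
        rw [hC, hM, hr₀def]

omit [NeZero n] in
theorem stmt_0' (ε : ℝ) (hε₁ : 0 < ε) (hε₂ : ε < 1/2)
    (F : Finset (Finset (Fin n)))
    (hSperner : ∀ A ∈ F, ∀ B ∈ F, A ≠ B → ¬ A ⊆ B)
    (hcov : ∀ A ∈ F, ∀ B ∈ F, A ∪ B ≠ Finset.univ)
    (A₀ : Finset (Fin n)) (hA₀ : A₀ ∈ F) (hsmall : (A₀.card : ℝ) ≤ ε * n) :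
    (F.card : ℝ) ≤ (1 - 1 / (n.choose ⌊ε * n⌋₊ : ℝ)) * (n.choose ((n - 1) / 2) : ℝ) + 1 := by
  classical
  have hn0 : n ≠ 0 := by
    intro h
    subst h
    apply hcov A₀ hA₀ A₀ hA₀
    apply Finset.eq_univ_of_forall
    intro x
    exact x.elim0
  haveI : NeZero n := ⟨hn0⟩
  have hn1 : 1 ≤ n := Nat.one_le_iff_ne_zero.2 hn0
  have hnR : (0:ℝ) < n := by exact_mod_cast Nat.pos_of_ne_zero hn0
  have hεn : ε * n < n / 2 := by nlinarith
  have ha₀half : 2 * A₀.card < n := by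
    have h2 : ((2 * A₀.card : ℕ) : ℝ) < n := by push_cast; linarith
    exact_mod_cast h2
  have hflR : ((⌊ε * n⌋₊ : ℕ) : ℝ) ≤ ε * n := Nat.floor_le (by positivity)
  have hflhalf : 2 * ⌊ε * n⌋₊ < n := by
    have h2 : ((2 * ⌊ε * n⌋₊ : ℕ) : ℝ) < n := by push_cast; linarith
    exact_mod_cast h2
  set G := Fᶜˢ with hG
  have hGcard : G.card = F.card := Finset.card_compls F
  have hAG : IsAntichain (· ⊆ ·) (G : Set (Finset (Fin n))) := by
    intro X hX Y hY hne hsub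
    rw [Finset.mem_coe, hG, Finset.mem_compls] at hX hY
    have hne' : Yᶜ ≠ Xᶜ := by
      intro h
      apply hne
      have := congrArg compl h
      simpa using this.symm
    exact hSperner Yᶜ hY Xᶜ hX hne' (Finset.compl_subset_compl.2 hsub)
  have hIG : ∀ X ∈ G, ∀ Y ∈ G, X ∩ Y ≠ ∅ := by
    intro X hX Y hY hempty
    rw [hG, Finset.mem_compls] at hX hY
    apply hcov Xᶜ hX Yᶜ hY
    rw [← Finset.compl_inter, hempty, Finset.compl_empty]
  obtain ⟨G', h1, h2, h3, h4⟩ := push_up (n / 2 + 1) 0 G (by omega) hAG hIG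
    (fun X _ => Nat.zero_le _)
  set B₀ := A₀ᶜ with hB₀
  have hB₀G : B₀ ∈ G := Finset.compl_mem_compls hA₀
  have hB₀card : B₀.card = n - A₀.card := by
    rw [hB₀, Finset.card_compl, Fintype.card_fin]
  have hB₀big : n / 2 + 1 ≤ B₀.card := by omega
  have hB₀G' : B₀ ∈ G' := h4 B₀ hB₀G hB₀big
  have hbound := final_bound G' h1 h2 B₀ hB₀G'
  -- compare binomials
  have ha₀n : A₀.card ≤ n := by omega
  have hsymm : n.choose B₀.card = n.choose A₀.card := by
    rw [hB₀card]
    exact Nat.choose_symm ha₀n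
  have hfl : A₀.card ≤ ⌊ε * n⌋₊ := Nat.le_floor hsmall
  have hmono : n.choose A₀.card ≤ n.choose ⌊ε * n⌋₊ :=
    choose_mono_half hfl (by omega)
  have hposa : 0 < n.choose A₀.card := Nat.choose_pos ha₀n
  have hposf : 0 < n.choose ⌊ε * n⌋₊ := Nat.choose_pos (by omega)
  have hposaR : (0:ℝ) < (n.choose A₀.card : ℝ) := by exact_mod_cast hposa
  have hmonoR : (n.choose A₀.card : ℝ) ≤ (n.choose ⌊ε * n⌋₊ : ℝ) := by exact_mod_cast hmono
  have hinv : 1 / (n.choose ⌊ε * n⌋₊ : ℝ) ≤ 1 / (n.choose A₀.card : ℝ) :=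
    one_div_le_one_div_of_le hposaR hmonoR
  have hMnonneg : (0:ℝ) ≤ (n.choose ((n - 1) / 2) : ℝ) := by positivity
  have hcompare : (1 - 1 / (n.choose B₀.card : ℝ)) * (n.choose ((n - 1) / 2) : ℝ) + 1
      ≤ (1 - 1 / (n.choose ⌊ε * n⌋₊ : ℝ)) * (n.choose ((n - 1) / 2) : ℝ) + 1 := by
    apply add_le_add_left
    apply mul_le_mul_of_nonneg_right _ hMnonneg
    rw [hsymm]
    linarith
  have hFG : (F.card : ℝ) ≤ (G'.card : ℝ) := by
    have : F.card ≤ G'.card := hGcard ▸ h3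
    exact_mod_cast this
  linarith


theorem stmt_0 (n : ℕ) (ε : ℝ) (hε₁ : 0 < ε) (hε₂ : ε < 1/2)
    (F : Finset (Finset (Fin n)))
    (hSperner : ∀ A ∈ F, ∀ B ∈ F, A ≠ B → ¬ A ⊆ B)
    (hcov : ∀ A ∈ F, ∀ B ∈ F, A ∪ B ≠ Finset.univ)
    (A₀ : Finset (Fin n)) (hA₀ : A₀ ∈ F) (hsmall : (A₀.card : ℝ) ≤ ε * n) :
    (F.card : ℝ) ≤ (1 - 1 / (n.choose ⌊ε * n⌋₊ : ℝ)) * (n.choose ((n - 1) / 2) : ℝ) + 1 := by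
  exact stmt_0' ε hε₁ hε₂ F hSperner hcov A₀ hA₀ hsmall
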